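/- If α < β, h : [α,β] → ℝ is Lipschitz with constant L0, h ≥ 0 on [α,β], h(α) = h(β) = 0, and ∫_α^β h(x) dx = A0, then β − α ≥ √(2A0/L0). -/
import Mathlib


open MeasureTheory Set

/-- If `α < β`, `h : [α,β] → ℝ` is Lipschitz with constant `L0`, `h ≥ 0` on `[α,β]`,
`h α = h β = 0`, and `∫_α^β h = A0`, then `β - α ≥ √(2 A0 / L0)`. -/
theorem stmt_0 (A0 L0 : ℝ) (hA0 : 0 < A0) (hL0 : 1 ≤ L0)
    (α β : ℝ) (hαβ : α < β) (h : ℝ → ℝ)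
    (hLip : ∀ x1 ∈ Set.Icc α β, ∀ x2 ∈ Set.Icc α β, |h x1 - h x2| ≤ L0 * |x1 - x2|)
    (hnonneg : ∀ x ∈ Set.Icc α β, 0 ≤ h x)
    (hhα : h α = 0) (hhβ : h β = 0)
    (harea : (∫ x in α..β, h x) = A0) :
    Real.sqrt (2 * A0 / L0) ≤ β - α := by
  have hL0pos : (0:ℝ) < L0 := lt_of_lt_of_le one_pos hL0
  -- h is Lipschitz on Icc, hence continuous on Icc
  have hlip' : LipschitzOnWith (Real.toNNReal L0) h (Icc α β) := by
    rw [lipschitzOnWith_iff_dist_le_mul]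
    intro x hx y hy
    have := hLip x hx y hy
    simpa [Real.dist_eq, Real.coe_toNNReal L0 hL0pos.le] using this
  have hcont : ContinuousOn h (Icc α β) := hlip'.continuousOn
  have hint : IntervalIntegrable h volume α β := by
    apply ContinuousOn.intervalIntegrable
    rwa [Set.uIcc_of_le hαβ.le]
  have hgint : IntervalIntegrable (fun x => L0 * (x - α)) volume α β := by
    apply ContinuousOn.intervalIntegrable
    fun_prop
  -- pointwise bound h x ≤ L0 * (x - α)
  have hbound : ∀ x ∈ Icc α β, h x ≤ L0 * (x - α) := by
    intro x hx
    have hαmem : α ∈ Icc α β := ⟨le_refl _, hαβ.le⟩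
    have := hLip x hx α hαmem
    rw [hhα, sub_zero] at this
    have habs : |h x| = h x := abs_of_nonneg (hnonneg x hx)
    have hxa : |x - α| = x - α := abs_of_nonneg (by linarith [hx.1])
    rw [habs, hxa] at this
    exact this
  have hmono : (∫ x in α..β, h x) ≤ ∫ x in α..β, L0 * (x - α) :=
    intervalIntegral.integral_mono_on hαβ.le hint hgint hbound
  have hcalc : (∫ x in α..β, L0 * (x - α)) = L0 * (β - α)^2 / 2 := by
    rw [intervalIntegral.integral_const_mul]
    have : (∫ x in α..β, (x - α)) = (∫ x in α..β, x) - (∫ _x in α..β, α) := by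
      rw [intervalIntegral.integral_sub intervalIntegral.intervalIntegrable_id
        (intervalIntegrable_const)]
    rw [this, integral_id, intervalIntegral.integral_const, smul_eq_mul]
    ring
  have hA : A0 ≤ L0 * (β - α)^2 / 2 := by rw [← harea, ← hcalc]; exact hmono
  have hkey : 2 * A0 / L0 ≤ (β - α)^2 := by
    rw [div_le_iff₀ hL0pos]
    nlinarith
  calc Real.sqrt (2 * A0 / L0) ≤ Real.sqrt ((β - α)^2) := Real.sqrt_le_sqrt hkey
    _ = β - α := by rw [Real.sqrt_sq (by linarith)]
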